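/- Let 𝒯 be the topology on ℝ^(ℕ) induced by the embedding (x_k) ↦ ((x_k),(x_k)) into L_G(s) × c₀ (where the second factor carries the sup-norm topology of the Banach space c₀). Then every 𝒯-continuous character χ of (ℝ^(ℕ), 𝒯) is of the form χ((x_n)) = exp(2πi Σ_n x_n y_n) for some real sequence (y_n) with y_n → 0; i.e., 𝒯 and the topology of L_G(s) have the same continuous characters. -/

import Mathlib

open Filter Topology
open Pointwise

/-- Every continuous character of `ℝ` has the form `t ↦ exp(2πi t y)`. -/
lemma char_real_exists (f : ℝ → Circle) (hadd : ∀ s t : ℝ, f (s + t) = f s * f t)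
    (hf : Continuous f) :
    ∃ y : ℝ, ∀ t : ℝ, (f t : ℂ) = Complex.exp (2 * Real.pi * Complex.I * (t * y)) := by
  have pi_pos := Real.pi_pos
  have f0 : f 0 = 1 := by
    have h := hadd 0 0
    rw [add_zero] at h
    have : f 0 * 1 = f 0 * f 0 := by rw [mul_one]; exact h
    exact (mul_left_cancel this).symm
  set g : ℝ → ℝ := fun t => Complex.arg (f t) with hg
  have g0 : g 0 = 0 := by simp [hg, f0]
  have fexp : ∀ t, (f t : ℂ) = Complex.exp (g t * Complex.I) := by
    intro t
    have h := Complex.norm_mul_exp_arg_mul_I (f t : ℂ)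
    rw [Circle.norm_coe] at h
    simpa using h.symm
  -- continuity of `t ↦ re (f t)`
  have hcoe : Continuous fun t : ℝ => (f t : ℂ) := continuous_subtype_val.comp hf
  have hre : ∀ᶠ t in 𝓝 (0:ℝ), 0 < ((f t : ℂ)).re := by
    have hct : Tendsto (fun t : ℝ => ((f t : ℂ)).re) (𝓝 0) (𝓝 1) := by
      have := (Complex.continuous_re.comp hcoe).tendsto 0
      simpa [f0, Function.comp_def] using this
    exact hct.eventually (eventually_gt_nhds one_pos)
  obtain ⟨ε, hε, hball⟩ := Metric.eventually_nhds_iff.mp hre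
  set δ := ε / 3 with hδ
  have hδpos : 0 < δ := by positivity
  have hgb : ∀ t : ℝ, |t| < ε → |g t| < Real.pi / 2 := by
    intro t ht
    exact Complex.abs_arg_lt_pi_div_two_iff.mpr (Or.inl (hball (by simpa using ht)))
  have hδε : ∀ t : ℝ, |t| ≤ δ → |t| < ε := fun t ht => lt_of_le_of_lt ht (by linarith)
  -- local additivity of g
  have gadd : ∀ s t : ℝ, |s| ≤ δ → |t| ≤ δ → g (s + t) = g s + g t := by
    intro s t hs ht
    have hst : |s + t| < ε := lt_of_le_of_lt (abs_add_le s t) (by linarith)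
    have e : Complex.exp (g (s+t) * Complex.I) = Complex.exp ((g s + g t) * Complex.I) := by
      rw [← fexp, hadd, Circle.coe_mul, fexp s, fexp t, ← Complex.exp_add]
      ring_nf
    obtain ⟨n, hn⟩ := Complex.exp_eq_exp_iff_exists_int.mp e
    have hreal : g (s+t) = g s + g t + n * (2 * Real.pi) := by
      have h2 : ((g (s+t) : ℂ)) = ((g s + g t + n * (2 * Real.pi) : ℝ) : ℂ) := by
        have hI : (Complex.I : ℂ) ≠ 0 := Complex.I_ne_zero
        apply mul_right_cancel₀ hI
        push_cast
        rw [hn]; ring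
      exact_mod_cast h2
    have h1 : |g (s+t)| < Real.pi / 2 := hgb _ hst
    have h2 : |g s| < Real.pi / 2 := hgb _ (hδε _ hs)
    have h3 : |g t| < Real.pi / 2 := hgb _ (hδε _ ht)
    have hn0 : n = 0 := by
      rcases lt_trichotomy n 0 with h | h | h
      · have : (n : ℝ) ≤ -1 := by exact_mod_cast Int.le_of_lt_add_one (by simpa using h)
        rw [abs_lt] at h1 h2 h3
        nlinarith
      · exact h
      · have : (1 : ℝ) ≤ n := by exact_mod_cast h
        rw [abs_lt] at h1 h2 h3
        nlinarith
    rw [hn0] at hreal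
    simpa using hreal
  -- multiples
  have gmul : ∀ (k : ℕ) (s : ℝ), |s| ≤ δ → |(k:ℝ)*s| ≤ δ → g ((k:ℝ)*s) = k * g s := by
    intro k
    induction k with
    | zero => intro s _ _; simpa using g0
    | succ k ih =>
      intro s hs hks
      push_cast at hks ⊢
      have hk : |(k:ℝ)*s| ≤ δ := by
        refine le_trans ?_ hks
        rw [abs_mul, abs_mul]
        have : |(k:ℝ)| ≤ |((k:ℕ)+1 : ℝ)| := by
          rw [abs_of_nonneg (by positivity), abs_of_nonneg (by positivity)]
          linarith
        exact mul_le_mul_of_nonneg_right (by push_cast at this ⊢; linarith [abs_nonneg s]) (abs_nonneg s)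
      have hsplit : ((k:ℕ)+1 : ℝ) * s = (k:ℝ)*s + s := by push_cast; ring
      calc g (((k:ℕ)+1 : ℝ) * s) = g ((k:ℝ)*s + s) := by rw [hsplit]
        _ = g ((k:ℝ)*s) + g s := gadd _ _ hk hs
        _ = k * g s + g s := by rw [ih s hs hk]
        _ = ((k:ℕ)+1 : ℝ) * g s := by push_cast; ring
  -- choice of denominators
  set N : ℝ → ℕ := fun t => ⌈|t|/δ⌉₊ + 1 with hN
  have hNpos : ∀ t, 0 < N t := fun t => Nat.succ_pos _
  have hNle : ∀ t, ∀ n : ℕ, N t ≤ n → |t / n| ≤ δ := by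
    intro t n hn
    have hn0 : 0 < (n:ℝ) := by exact_mod_cast lt_of_lt_of_le (hNpos t) hn
    rw [abs_div, abs_of_pos hn0, div_le_iff₀ hn0]
    have h1 : |t|/δ ≤ (⌈|t|/δ⌉₊ : ℝ) := Nat.le_ceil _
    have h2 : ((⌈|t|/δ⌉₊ : ℕ) : ℝ) + 1 ≤ (n : ℝ) := by exact_mod_cast hn
    calc |t| = (|t|/δ) * δ := by field_simp
      _ ≤ (n:ℝ) * δ := by nlinarith
      _ = δ * (n:ℝ) := mul_comm _ _
  set G : ℝ → ℝ := fun t => (N t : ℝ) * g (t / N t) with hG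
  -- G is n * g(t/n) for any suitable n
  have hGaux : ∀ (t : ℝ) (a b : ℕ), 0 < a → 0 < b → |t/a| ≤ δ →
      (a:ℝ) * g (t/a) = ((a*b : ℕ):ℝ) * g (t/((a*b:ℕ):ℝ)) := by
    intro t a b ha hb hta
    have ha0 : (a:ℝ) ≠ 0 := by positivity
    have hb0 : (b:ℝ) ≠ 0 := by positivity
    have hab : ((a*b:ℕ):ℝ) = (a:ℝ)*(b:ℝ) := by push_cast; ring
    have key : (b:ℝ) * (t/((a:ℝ)*(b:ℝ))) = t/a := by field_simp
    have hsmall : |t/((a:ℝ)*(b:ℝ))| ≤ δ := by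
      refine le_trans ?_ hta
      rw [abs_div, abs_div]
      apply div_le_div_of_nonneg_left (abs_nonneg t) ?_ ?_ |>.trans_eq rfl
      · positivity
      · rw [abs_of_pos (by positivity), abs_of_pos (by positivity)]
        nlinarith [show (1:ℝ) ≤ (b:ℝ) by exact_mod_cast hb]
    have := gmul b (t/((a:ℝ)*(b:ℝ))) hsmall (by rw [key]; exact hta)
    rw [key] at this
    rw [hab, this]
    ring
  have hGn : ∀ (t : ℝ) (n : ℕ), 0 < n → |t/n| ≤ δ → G t = (n:ℝ) * g (t/n) := by
    intro t n hn htn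
    have h1 := hGaux t (N t) n (hNpos t) hn (hNle t (N t) le_rfl)
    have h2 := hGaux t n (N t) hn (hNpos t) htn
    rw [hG]
    simp only []
    rw [h1, h2, Nat.mul_comm]
  have Gsmall : ∀ t : ℝ, |t| ≤ δ → G t = g t := by
    intro t ht
    have := hGn t 1 one_pos (by simpa using ht)
    simpa using this
  have Gadd : ∀ s t : ℝ, G (s + t) = G s + G t := by
    intro s t
    set n := N s + N t + N (s+t) with hn
    have hns : N s ≤ n := by omega
    have hnt : N t ≤ n := by omega
    have hnst : N (s+t) ≤ n := by omega
    have hnpos : 0 < n := by have := hNpos s; omega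
    have hsd := hNle s n hns
    have htd := hNle t n hnt
    have hsplit : (s+t)/(n:ℝ) = s/n + t/n := by ring
    rw [hGn (s+t) n hnpos (hNle _ n hnst), hGn s n hnpos hsd, hGn t n hnpos htd,
      hsplit, gadd _ _ hsd htd]
    ring
  -- continuity of G
  have Gc0 : ContinuousAt G 0 := by
    have hgc : ContinuousAt g 0 := by
      have h1 : ContinuousAt Complex.arg ((f 0 : ℂ)) := by
        apply Complex.continuousAt_arg
        rw [f0]
        simpa using Complex.one_mem_slitPlane
      exact ContinuousAt.comp (x := (0:ℝ)) (g := Complex.arg)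
        (f := fun t : ℝ => (f t : ℂ)) h1 hcoe.continuousAt
    apply hgc.congr
    have : ∀ᶠ t in 𝓝 (0:ℝ), |t| ≤ δ := by
      have : Set.Icc (-δ) δ ∈ 𝓝 (0:ℝ) := Icc_mem_nhds (by linarith) hδpos
      filter_upwards [this] with t ht
      rw [abs_le]; exact ht
    filter_upwards [this] with t ht
    exact (Gsmall t ht).symm
  have Gcont : Continuous G := by
    rw [continuous_iff_continuousAt]
    intro x
    have hrep : G = fun t => G x + G (t - x) := by
      funext t
      rw [← Gadd]
      congr 1
      ring
    rw [hrep]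
    apply ContinuousAt.add continuousAt_const
    have hinner : ContinuousAt (fun t : ℝ => t - x) x :=
      (continuous_id.sub continuous_const).continuousAt
    have : ContinuousAt G ((fun t : ℝ => t - x) x) := by simpa using Gc0
    exact ContinuousAt.comp (g := G) (f := fun t : ℝ => t - x) this hinner
  -- linearity
  have Glin : ∀ t : ℝ, G t = t * G 1 := by
    intro t
    have := map_real_smul (AddMonoidHom.mk' G Gadd) Gcont t 1
    simpa [smul_eq_mul] using this
  -- powers of f
  have fpow : ∀ (k : ℕ) (s : ℝ), f ((k:ℝ)*s) = f s ^ k := by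
    intro k
    induction k with
    | zero => intro s; simpa using f0
    | succ k ih =>
      intro s
      have hsplit : ((k+1:ℕ):ℝ) * s = (k:ℝ)*s + s := by push_cast; ring
      rw [hsplit, hadd, ih, pow_succ]
  refine ⟨G 1 / (2 * Real.pi), fun t => ?_⟩
  set n := N t with hn
  have hnpos : 0 < n := hNpos t
  have hn0 : (n:ℝ) ≠ 0 := by positivity
  have ht : t = (n:ℝ) * (t/n) := by field_simp
  have h1 : (f t : ℂ) = Complex.exp ((((n:ℝ) * g (t/(n:ℝ)) : ℝ) : ℂ) * Complex.I) := by
    have h2 : (f t : ℂ) = ((f (t/(n:ℝ)) : ℂ))^n := by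
      conv_lhs => rw [ht, fpow n (t/(n:ℝ))]
      norm_cast
    rw [h2, fexp (t/(n:ℝ)), ← Complex.exp_nat_mul]
    congr 1
    push_cast
    ring
  rw [h1, ← hGn t n hnpos (hNle t n hn.ge), Glin t]
  congr 1
  push_cast
  field_simp [Complex.ofReal_ne_zero.mpr Real.pi_ne_zero]
lemma combo_mem {E : Type*} [AddCommGroup E] [Module ℝ E] {W : Set E}
    (hW : Convex ℝ W) (h0 : (0:E) ∈ W) (hb : Balanced ℝ W)
    (F : Finset ℕ) (t : ℕ → ℝ) (v : ℕ → E) (hv : ∀ i ∈ F, v i ∈ W)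
    (ht : ∑ i ∈ F, |t i| ≤ 1) :
    (∑ i ∈ F, t i • v i) ∈ W := by
  classical
  set j : ℕ := F.sup id + 1 with hj
  have hjF : j ∉ F := by
    intro hmem
    have := Finset.le_sup (f := id) hmem
    simp only [id] at this
    omega
  set w : ℕ → ℝ := fun i => if i = j then 1 - ∑ i ∈ F, |t i| else |t i| with hw
  set u : ℕ → E := fun i => if i = j then 0 else
    (if t i = 0 then 0 else |t i|⁻¹ • (t i • v i)) with hu
  have hnonneg : ∀ i ∈ insert j F, 0 ≤ w i := by
    intro i hi
    by_cases h : i = j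
    · simp [hw, h]; linarith
    · simp [hw, h, abs_nonneg]
  have hsum : ∑ i ∈ insert j F, w i = 1 := by
    rw [Finset.sum_insert hjF]
    have : ∑ i ∈ F, w i = ∑ i ∈ F, |t i| := by
      apply Finset.sum_congr rfl
      intro i hi
      have : i ≠ j := fun h => hjF (h ▸ hi)
      simp [hw, this]
    rw [this]
    simp [hw]
  have humem : ∀ i ∈ insert j F, u i ∈ W := by
    intro i hi
    by_cases h : i = j
    · simpa [hu, h] using h0
    · by_cases h2 : t i = 0
      · simpa [hu, h, h2] using h0
      · have hiF : i ∈ F := by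
          rcases Finset.mem_insert.mp hi with h' | h'
          · exact absurd h' h
          · exact h'
        have : |t i|⁻¹ • (t i • v i) = (t i / |t i|) • v i := by
          rw [smul_smul]; congr 1; field_simp
        simp only [hu, if_neg h, if_neg h2, this]
        apply hb.smul_mem _ (hv i hiF)
        rw [Real.norm_eq_abs, abs_div, abs_abs, div_self (abs_ne_zero.mpr h2)]
  have hrepr : ∑ i ∈ insert j F, w i • u i = ∑ i ∈ F, t i • v i := by
    rw [Finset.sum_insert hjF]
    have h1 : w j • u j = 0 := by simp [hu]
    rw [h1, zero_add]
    apply Finset.sum_congr rfl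
    intro i hi
    have hij : i ≠ j := fun h => hjF (h ▸ hi)
    by_cases h2 : t i = 0
    · simp [hw, hu, hij, h2]
    · simp only [hw, hu, if_neg hij, if_neg h2]
      rw [smul_smul, mul_inv_cancel₀ (abs_ne_zero.mpr h2), one_smul]
  rw [← hrepr]
  exact hW.sum_mem hnonneg hsum humem


/-- `t` is a locally convex vector topology on `ℝ^(ℕ)` (the finitely supported real
sequences). -/
def IsLCVectorTopology (t : TopologicalSpace (ℕ →₀ ℝ)) : Prop :=
  @IsTopologicalAddGroup (ℕ →₀ ℝ) t _ ∧ @ContinuousSMul ℝ (ℕ →₀ ℝ) _ _ t ∧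
    @LocallyConvexSpace ℝ (ℕ →₀ ℝ) _ _ _ _ t

/-- `ν` is the finest locally convex vector topology on `ℝ^(ℕ)` in which the standard
basis vectors `e_n = single n 1` converge to `0` (this is the topology of the Graev
free locally convex space `L_G(s)`). -/
def IsNuTopology (ν : TopologicalSpace (ℕ →₀ ℝ)) : Prop :=
  IsLCVectorTopology ν ∧
  Tendsto (fun n : ℕ => Finsupp.single n (1 : ℝ)) atTop (@nhds (ℕ →₀ ℝ) ν 0) ∧
  ∀ t : TopologicalSpace (ℕ →₀ ℝ), IsLCVectorTopology t →
    Tendsto (fun n : ℕ => Finsupp.single n (1 : ℝ)) atTop (@nhds (ℕ →₀ ℝ) t 0) → ν ≤ t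

/-- let `𝒯` be the topology on `ℝ^(ℕ)` induced by the embedding
`(x_k) ↦ ((x_k), (x_k))` into `L_G(s) × c₀` (the second factor carrying the sup-norm =
uniform-convergence topology).  Then every `𝒯`-continuous character of `(ℝ^(ℕ), 𝒯)` has
the form `χ((x_n)) = exp(2πi Σ_n x_n y_n)` for some null sequence `(y_n)`; i.e. `𝒯` and
`ν` have the same continuous characters. -/
theorem stmt16 (ν : TopologicalSpace (ℕ →₀ ℝ)) (hν : IsNuTopology ν)
    (χ : (ℕ →₀ ℝ) → Circle) (hhom : ∀ x y : ℕ →₀ ℝ, χ (x + y) = χ x * χ y)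
    (hcont : Continuous[
        TopologicalSpace.induced
          (fun x : ℕ →₀ ℝ => ((x, UniformFun.ofFun ⇑x) : (ℕ →₀ ℝ) × UniformFun ℕ ℝ))
          (@instTopologicalSpaceProd (ℕ →₀ ℝ) (UniformFun ℕ ℝ) ν inferInstance),
        inferInstance] χ) :
    ∃ y : ℕ → ℝ, Tendsto y atTop (nhds 0) ∧
      ∀ x : ℕ →₀ ℝ,
        (χ x : ℂ) = Complex.exp (2 * Real.pi * Complex.I * (x.sum fun n c => c * y n)) := by

  classical
  obtain ⟨⟨hgrp, hsmul, hlcs⟩, hbasis, -⟩ := hν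
  letI : TopologicalSpace (ℕ →₀ ℝ) := ν
  haveI : IsTopologicalAddGroup (ℕ →₀ ℝ) := hgrp
  haveI : ContinuousSMul ℝ (ℕ →₀ ℝ) := hsmul
  haveI : LocallyConvexSpace ℝ (ℕ →₀ ℝ) := hlcs
  set f : (ℕ →₀ ℝ) → (ℕ →₀ ℝ) × UniformFun ℕ ℝ :=
    fun x => (x, UniformFun.ofFun ⇑x) with hf
  -- χ(0) = 1
  have χ0 : χ 0 = 1 := by
    have h := hhom 0 0
    rw [add_zero] at h
    have : χ 0 * 1 = χ 0 * χ 0 := by rw [mul_one]; exact h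
    exact (mul_left_cancel this).symm
  -- each coordinate line is continuous into 𝒯
  have hLν : ∀ n : ℕ, Continuous (fun t : ℝ => Finsupp.single n t) := by
    intro n
    have h : (fun t : ℝ => Finsupp.single n t)
        = fun t : ℝ => t • Finsupp.single n (1:ℝ) := by
      funext t
      rw [Finsupp.smul_single', mul_one]
    rw [h]
    exact continuous_id.smul continuous_const
  have hLu : ∀ n : ℕ, Continuous (fun t : ℝ =>
      (UniformFun.ofFun ⇑(Finsupp.single n t) : UniformFun ℕ ℝ)) := by
    intro n
    rw [continuous_iff_continuousAt]
    intro t₀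
    unfold ContinuousAt
    rw [UniformFun.tendsto_iff_tendstoUniformly, Metric.tendstoUniformly_iff]
    intro ε hε
    filter_upwards [Metric.ball_mem_nhds t₀ hε] with t ht m
    simp only [Function.comp, UniformFun.toFun_ofFun, Finsupp.single_apply]
    split_ifs
    · rw [dist_comm]
      exact ht
    · simpa using hε
  have hχline : ∀ n : ℕ, Continuous fun t : ℝ => χ (Finsupp.single n t) := by
    intro n
    exact @Continuous.comp ℝ (ℕ →₀ ℝ) Circle _
      (TopologicalSpace.induced f
        (@instTopologicalSpaceProd (ℕ →₀ ℝ) (UniformFun ℕ ℝ) ν inferInstance)) _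
      (fun t : ℝ => Finsupp.single n t) χ hcont
      (continuous_induced_rng.mpr ((hLν n).prodMk (hLu n)))
  -- classify the line characters
  choose y hy using fun n : ℕ =>
    char_real_exists (fun t : ℝ => χ (Finsupp.single n t))
      (fun s t => by
        show χ (Finsupp.single n (s+t)) = χ (Finsupp.single n s) * χ (Finsupp.single n t)
        rw [Finsupp.single_add, hhom]) (hχline n)
  -- product formula
  have hprodF : ∀ (F : Finset ℕ) (h : ℕ → (ℕ →₀ ℝ)),
      χ (∑ i ∈ F, h i) = ∏ i ∈ F, χ (h i) := by
    intro F h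
    induction F using Finset.induction_on with
    | empty => simpa using χ0
    | @insert a F ha ih => rw [Finset.sum_insert ha, hhom, ih, Finset.prod_insert ha]
  have hformula : ∀ x : ℕ →₀ ℝ,
      (χ x : ℂ) = Complex.exp (2 * Real.pi * Complex.I * (x.sum fun n c => c * y n)) := by
    intro x
    have hx := Finsupp.sum_single x
    rw [Finsupp.sum] at hx
    calc (χ x : ℂ) = ↑(∏ n ∈ x.support, χ (Finsupp.single n (x n))) := by
          rw [← hprodF, hx]
      _ = ∏ n ∈ x.support, (χ (Finsupp.single n (x n)) : ℂ) :=
          map_prod Circle.coeHom _ _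
      _ = ∏ n ∈ x.support, Complex.exp (2 * Real.pi * Complex.I * ((x n) * y n)) := by
          apply Finset.prod_congr rfl
          intro n _
          exact_mod_cast hy n (x n)
      _ = Complex.exp (∑ n ∈ x.support, 2 * Real.pi * Complex.I * ((x n) * y n)) :=
          (Complex.exp_sum _ _).symm
      _ = Complex.exp (2 * Real.pi * Complex.I * (x.sum fun n c => c * y n)) := by
          congr 1
          rw [Finsupp.sum]
          push_cast
          rw [Finset.mul_sum]
  refine ⟨y, ?_, hformula⟩
  -- now the hard part: y → 0
  by_contra hnot
  have hfreq : ∃ δ > 0, ∃ᶠ n in atTop, δ ≤ |y n| := by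
    rw [Metric.tendsto_atTop] at hnot
    push_neg at hnot
    obtain ⟨δ, hδ, hN⟩ := hnot
    refine ⟨δ, hδ, frequently_atTop.mpr fun N => ?_⟩
    obtain ⟨n, hn, h⟩ := hN N
    refine ⟨n, hn, ?_⟩
    rwa [Real.dist_eq, sub_zero] at h
  obtain ⟨δ, hδpos, hfreq⟩ := hfreq
  obtain ⟨φ, hφmono, hφ⟩ := Filter.extraction_of_frequently_atTop hfreq
  have hyne : ∀ k : ℕ, y (φ k) ≠ 0 := by
    intro k h
    have := hφ k
    rw [h, abs_zero] at this
    linarith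
  set xs : ℕ → (ℕ →₀ ℝ) := fun m =>
    ∑ k ∈ Finset.range m,
      Finsupp.single (φ (m + k)) (1 / (2 * m * y (φ (m + k)))) with hxs
  -- value of the character on xs m
  have hval : ∀ m : ℕ, 0 < m → ((xs m).sum fun n c => c * y n) = 1/2 := by
    intro m hm
    have hm0 : (m:ℝ) ≠ 0 := by positivity
    have h1 : ((xs m).sum fun n c => c * y n) = Finsupp.linearCombination ℝ y (xs m) := by
      rw [Finsupp.linearCombination_apply]
      rfl
    rw [h1, hxs]
    simp only [map_sum]
    have h2 : ∀ k ∈ Finset.range m,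
        Finsupp.linearCombination ℝ y
          (Finsupp.single (φ (m+k)) (1 / (2 * m * y (φ (m + k))))) = 1/(2*m) := by
      intro k _
      rw [Finsupp.linearCombination_single, smul_eq_mul, div_mul_eq_mul_div, one_mul,
        div_eq_div_iff (mul_ne_zero (by positivity) (hyne (m+k))) (by positivity)]
      ring
    rw [Finset.sum_congr rfl h2, Finset.sum_const, Finset.card_range, nsmul_eq_mul]
    field_simp
  have hχm : ∀ m : ℕ, 0 < m → (χ (xs m) : ℂ) = -1 := by
    intro m hm
    rw [hformula, hval m hm]
    have : (2 * (Real.pi:ℂ) * Complex.I * (((1:ℝ)/2 : ℝ) : ℂ)) = ↑Real.pi * Complex.I := by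
      push_cast
      ring
    rw [show ((1:ℝ)/2 : ℝ) = (1/2 : ℝ) from rfl] at this
    rw [this, Complex.exp_pi_mul_I]
  -- convergence to 0 in ν
  have hνlim : Tendsto xs atTop (𝓝 (0 : ℕ →₀ ℝ)) := by
    rw [(nhds_hasBasis_absConvex ℝ (ℕ →₀ ℝ)).tendsto_right_iff]
    rintro W ⟨hWnhds, hWbal, hWconv⟩
    simp only [id]
    have hδW : δ • W ∈ 𝓝 (0 : ℕ →₀ ℝ) := by
      have hc : Continuous fun x : ℕ →₀ ℝ => δ⁻¹ • x := continuous_id.const_smul δ⁻¹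
      have hpre : (fun x : ℕ →₀ ℝ => δ⁻¹ • x) ⁻¹' W ∈ 𝓝 (0 : ℕ →₀ ℝ) := by
        apply ContinuousAt.preimage_mem_nhds hc.continuousAt
        simpa using hWnhds
      have heq : (fun x : ℕ →₀ ℝ => δ⁻¹ • x) ⁻¹' W = δ • W := by
        ext x
        rw [Set.mem_smul_set_iff_inv_smul_mem₀ hδpos.ne']
        rfl
      rwa [heq] at hpre
    obtain ⟨N, hNmem⟩ := eventually_atTop.mp (hbasis.eventually_mem hδW)
    filter_upwards [eventually_ge_atTop (max N 1)] with m hm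
    have hm1 : 1 ≤ m := le_trans (le_max_right N 1) hm
    have hmN : N ≤ m := le_trans (le_max_left N 1) hm
    have hmem : ∀ k ∈ Finset.range m, δ⁻¹ • Finsupp.single (φ (m+k)) (1:ℝ) ∈ W := by
      intro k _
      have hchain : N ≤ φ (m + k) :=
        le_trans hmN (le_trans (Nat.le_add_right m k) hφmono.le_apply)
      have h1 : Finsupp.single (φ (m+k)) (1:ℝ) ∈ δ • W := hNmem _ hchain
      rwa [Set.mem_smul_set_iff_inv_smul_mem₀ hδpos.ne'] at h1
    have hrw : xs m = ∑ k ∈ Finset.range m,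
        ((1 / (2 * m * y (φ (m + k)))) * δ) • (δ⁻¹ • Finsupp.single (φ (m+k)) (1:ℝ)) := by
      rw [hxs]
      apply Finset.sum_congr rfl
      intro k _
      rw [smul_smul, mul_assoc (1 / (2 * (m:ℝ) * y (φ (m + k)))) δ δ⁻¹,
        mul_inv_cancel₀ hδpos.ne', mul_one, Finsupp.smul_single', mul_one]
    rw [hrw]
    apply combo_mem hWconv (mem_of_mem_nhds hWnhds) hWbal _ _ _ hmem
    have hm0 : (0:ℝ) < (m:ℝ) := by exact_mod_cast hm1
    have hbound : ∀ k ∈ Finset.range m,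
        |(1 / (2 * (m:ℝ) * y (φ (m + k)))) * δ| ≤ 1/(2*m) := by
      intro k _
      have hyk := hφ (m+k)
      have hykpos : 0 < |y (φ (m+k))| := lt_of_lt_of_le hδpos hyk
      rw [abs_mul, abs_of_pos hδpos, abs_div, abs_one, abs_mul, abs_mul]
      rw [abs_of_nonneg (by norm_num : (0:ℝ) ≤ 2), abs_of_nonneg hm0.le]
      rw [div_mul_eq_mul_div, one_mul, div_le_div_iff₀ (by positivity) (by positivity)]
      calc δ * (2 * (m:ℝ)) = 2 * m * δ := by ring
        _ ≤ 2 * m * |y (φ (m+k))| := by nlinarith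
        _ = 1 * (2 * (m:ℝ) * |y (φ (m+k))|) := by ring
    calc ∑ k ∈ Finset.range m, |(1 / (2 * (m:ℝ) * y (φ (m + k)))) * δ|
        ≤ ∑ _k ∈ Finset.range m, 1/(2*(m:ℝ)) := Finset.sum_le_sum hbound
      _ = m * (1/(2*(m:ℝ))) := by rw [Finset.sum_const, Finset.card_range, nsmul_eq_mul]
      _ ≤ 1 := by rw [mul_one_div]; rw [div_le_one (by positivity)]; linarith
  -- coordinatewise bound
  have hcoord : ∀ m : ℕ, 0 < m → ∀ n : ℕ, |(xs m) n| ≤ 1/(2*m*δ) := by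
    intro m hm n
    have hm0 : (0:ℝ) < (m:ℝ) := by exact_mod_cast hm
    rw [hxs]
    simp only [Finsupp.finset_sum_apply]
    by_cases hex : ∃ a ∈ Finset.range m, φ (m + a) = n
    · obtain ⟨a, ha, hae⟩ := hex
      have hsum : ∑ k ∈ Finset.range m,
          (Finsupp.single (φ (m+k)) (1 / (2 * (m:ℝ) * y (φ (m + k))))) n
          = 1 / (2 * (m:ℝ) * y (φ (m + a))) := by
        rw [Finset.sum_eq_single_of_mem a ha]
        · rw [Finsupp.single_apply, if_pos hae]
        · intro b hb hba
          rw [Finsupp.single_apply, if_neg]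
          intro h
          exact hba (by have := hφmono.injective (h.trans hae.symm); omega)
      rw [hsum]
      have hyk := hφ (m+a)
      have hykpos : 0 < |y (φ (m+a))| := lt_of_lt_of_le hδpos hyk
      rw [abs_div, abs_one, abs_mul, abs_mul,
        abs_of_nonneg (by norm_num : (0:ℝ) ≤ 2), abs_of_nonneg hm0.le]
      rw [div_le_div_iff₀ (by positivity) (by positivity)]
      nlinarith
    · push_neg at hex
      have hsum : ∑ k ∈ Finset.range m,
          (Finsupp.single (φ (m+k)) (1 / (2 * (m:ℝ) * y (φ (m + k))))) n = 0 :=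
        Finset.sum_eq_zero fun k hk => by
          rw [Finsupp.single_apply, if_neg (hex k hk)]
      rw [hsum, abs_zero]
      positivity
  -- sup-norm convergence
  have hsup : Tendsto (fun m => UniformFun.ofFun ⇑(xs m)) atTop
      (𝓝 (UniformFun.ofFun ⇑(0 : ℕ →₀ ℝ))) := by
    rw [UniformFun.tendsto_iff_tendstoUniformly, Metric.tendstoUniformly_iff]
    intro ε hε
    obtain ⟨M, hM⟩ := exists_nat_gt (1/(2*δ*ε))
    filter_upwards [eventually_ge_atTop (max M 1)] with m hm n
    have hm1 : 1 ≤ m := le_trans (le_max_right M 1) hm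
    have hmM : M ≤ m := le_trans (le_max_left M 1) hm
    have hm0 : (0:ℝ) < (m:ℝ) := by exact_mod_cast hm1
    have hMm : 1/(2*δ*ε) < (m:ℝ) := lt_of_lt_of_le hM (by exact_mod_cast hmM)
    have hb := hcoord m hm1 n
    simp only [Function.comp, UniformFun.toFun_ofFun, Finsupp.coe_zero, Pi.zero_apply]
    rw [Real.dist_eq, zero_sub, abs_neg]
    calc |(xs m) n| ≤ 1/(2*m*δ) := hb
      _ < ε := by
        rw [div_lt_iff₀ (by positivity)]
        rw [div_lt_iff₀ (by positivity)] at hMm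
        nlinarith
  -- combine into 𝒯-convergence and contradiction
  have hT : Tendsto xs atTop
      (@nhds _ (TopologicalSpace.induced f
        (@instTopologicalSpaceProd (ℕ →₀ ℝ) (UniformFun ℕ ℝ) ν inferInstance)) 0) := by
    rw [nhds_induced, tendsto_comap_iff]
    exact hνlim.prodMk_nhds hsup
  have hlim1 : Tendsto (fun m => (χ (xs m) : ℂ)) atTop (𝓝 ((χ 0 : ℂ))) := by
    have hc := @Continuous.comp (ℕ →₀ ℝ) Circle ℂ
      (TopologicalSpace.induced f
        (@instTopologicalSpaceProd (ℕ →₀ ℝ) (UniformFun ℕ ℝ) ν inferInstance)) _ _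
      χ Subtype.val continuous_subtype_val hcont
    exact (@Continuous.tendsto (ℕ →₀ ℝ) ℂ
      (TopologicalSpace.induced f
        (@instTopologicalSpaceProd (ℕ →₀ ℝ) (UniformFun ℕ ℝ) ν inferInstance)) _ _
      hc 0).comp hT
  have hlim2 : Tendsto (fun _ : ℕ => (-1 : ℂ)) atTop (𝓝 ((χ 0 : ℂ))) := by
    apply hlim1.congr'
    filter_upwards [eventually_ge_atTop 1] with m hm
    exact hχm m hm
  have heq : (-1 : ℂ) = (χ 0 : ℂ) := tendsto_nhds_unique tendsto_const_nhds hlim2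
  rw [χ0, Circle.coe_one] at heq
  norm_num at heq
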